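/- For fixed m > 0, the function α ↦ P(α/2, m/2) is strictly increasing on (0, ∞), and is convex on the interval (0, m - 2] whenever m > 2. -/

import Mathlib

open Real MeasureTheory Set intervalIntegral

/-- Regularized lower incomplete gamma function. -/
noncomputable def P (x s : ℝ) : ℝ :=
  (Real.Gamma s)⁻¹ * ∫ t in (0:ℝ)..x, t ^ (s - 1) * Real.exp (-t)

lemma igamma_intble {s : ℝ} (hs : 0 < s) {x : ℝ} (hx : 0 ≤ x) :
    IntervalIntegrable (fun t => t ^ (s - 1) * Real.exp (-t)) volume 0 x := by
  rw [intervalIntegrable_iff_integrableOn_Ioc_of_le hx]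
  have h := (Real.GammaIntegral_convergent hs).mono_set
    (Set.Ioc_subset_Ioi_self : Set.Ioc 0 x ⊆ Set.Ioi 0)
  have heq : (fun t : ℝ => t ^ (s - 1) * Real.exp (-t))
      = fun t : ℝ => Real.exp (-t) * t ^ (s - 1) := by ext t; ring
  rw [heq]; exact h

lemma igamma_hasDerivAt {s : ℝ} (hs : 0 < s) {x : ℝ} (hx : 0 < x) :
    HasDerivAt (fun u : ℝ => ∫ t in (0:ℝ)..u, t ^ (s - 1) * Real.exp (-t))
      (x ^ (s - 1) * Real.exp (-x)) x := by
  have hcont : ContinuousAt (fun t : ℝ => t ^ (s - 1) * Real.exp (-t)) x :=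
    (Real.continuousAt_rpow_const x (s - 1) (Or.inl hx.ne')).mul
      ((Real.continuous_exp.comp continuous_neg).continuousAt)
  have hco : ContinuousOn (fun t : ℝ => t ^ (s - 1) * Real.exp (-t)) (Set.Ioi 0) := by
    intro t ht
    exact ((Real.continuousAt_rpow_const t (s - 1) (Or.inl (ne_of_gt ht))).mul
      ((Real.continuous_exp.comp continuous_neg).continuousAt)).continuousWithinAt
  exact integral_hasDerivAt_right (igamma_intble hs hx.le)
    (hco.stronglyMeasurableAtFilter isOpen_Ioi x hx) hcont

theorem P_half_strictMono_and_convex (m : ℝ) (hm : 0 < m) :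
    StrictMonoOn (fun a : ℝ => P (a / 2) (m / 2)) (Set.Ioi (0:ℝ)) ∧
    (2 < m → ConvexOn ℝ (Set.Ioc (0:ℝ) (m - 2)) (fun a : ℝ => P (a / 2) (m / 2))) := by
  have hs : 0 < m / 2 := by linarith
  have hc : 0 < (Real.Gamma (m / 2))⁻¹ := inv_pos.mpr (Real.Gamma_pos_of_pos hs)
  have hD : ∀ a : ℝ, 0 < a → HasDerivAt (fun a : ℝ => P (a / 2) (m / 2))
      ((Real.Gamma (m / 2))⁻¹ * ((a / 2) ^ (m / 2 - 1) * Real.exp (-(a / 2)) * (1 / 2))) a := by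
    intro a ha
    have h1 : HasDerivAt (fun x : ℝ => x / 2) (1 / 2) a := (hasDerivAt_id a).div_const 2
    have h2 := (igamma_hasDerivAt hs (by linarith : (0:ℝ) < a / 2)).comp a h1
    have h3 := h2.const_mul ((Real.Gamma (m / 2))⁻¹)
    exact h3
  constructor
  · intro a ha b hb hab
    simp only [P]
    have h1 := igamma_intble hs (le_of_lt (by linarith [Set.mem_Ioi.mp ha] : (0:ℝ) < a / 2))
    have h2 := igamma_intble hs (le_of_lt (by linarith [Set.mem_Ioi.mp hb] : (0:ℝ) < b / 2))
    have h12 := h1.symm.trans h2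
    have hadd := intervalIntegral.integral_add_adjacent_intervals h1 h12
    have hpos : 0 < ∫ t in (a/2)..(b/2), t ^ (m / 2 - 1) * Real.exp (-t) := by
      apply intervalIntegral.intervalIntegral_pos_of_pos_on h12
      · intro t ht
        have ht0 : 0 < t := lt_trans (by linarith [Set.mem_Ioi.mp ha]) ht.1
        positivity
      · linarith
    exact mul_lt_mul_of_pos_left (by linarith) hc
  · intro hm2
    have hint : interior (Set.Ioc (0:ℝ) (m - 2)) = Set.Ioo 0 (m - 2) := interior_Ioc
    apply MonotoneOn.convexOn_of_deriv (convex_Ioc _ _)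
    · intro a ha
      exact (hD a ha.1).continuousAt.continuousWithinAt
    · rw [hint]; intro a ha
      exact (hD a ha.1).differentiableAt.differentiableWithinAt
    · rw [hint]
      have hGd : ∀ u : ℝ, 0 < u → HasDerivAt (fun u : ℝ => u ^ (m / 2 - 1) * Real.exp (-u))
          ((m / 2 - 1) * u ^ (m / 2 - 1 - 1) * Real.exp (-u)
            + u ^ (m / 2 - 1) * (Real.exp (-u) * (-1))) u := by
        intro u hu
        have hr := Real.hasDerivAt_rpow_const (p := m / 2 - 1) (Or.inl hu.ne')
        have he : HasDerivAt (fun x : ℝ => Real.exp (-x)) (Real.exp (-u) * (-1)) u :=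
          HasDerivAt.exp (hasDerivAt_neg u)
        exact hr.mul he
      have hG : MonotoneOn (fun u : ℝ => u ^ (m / 2 - 1) * Real.exp (-u))
          (Set.Ioc 0 (m / 2 - 1)) := by
        have h1 : (0:ℝ) < m / 2 - 1 := by linarith
        apply monotoneOn_of_deriv_nonneg (convex_Ioc _ _)
        · intro u hu
          exact ((Real.continuousAt_rpow_const u _ (Or.inr (by linarith))).mul
            ((Real.continuous_exp.comp continuous_neg).continuousAt)).continuousWithinAt
        · rw [interior_Ioc]; intro u hu
          exact (hGd u hu.1).differentiableAt.differentiableWithinAt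
        · rw [interior_Ioc]; intro u hu
          rw [(hGd u hu.1).deriv]
          have hrw : u ^ (m / 2 - 1) = u ^ (m / 2 - 1 - 1) * u := by
            rw [show m / 2 - 1 = (m / 2 - 1 - 1) + 1 by ring, Real.rpow_add_one hu.1.ne']
            ring_nf
          rw [hrw]
          have hA : 0 < u ^ (m / 2 - 1 - 1) := Real.rpow_pos_of_pos hu.1 _
          have hE : 0 < Real.exp (-u) := Real.exp_pos _
          nlinarith [mul_nonneg (mul_pos hA hE).le (show (0:ℝ) ≤ m / 2 - 1 - u by linarith [hu.2])]
      intro x hx y hy hxy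
      rw [(hD x hx.1).deriv, (hD y hy.1).deriv]
      have hmx : x / 2 ∈ Set.Ioc (0:ℝ) (m / 2 - 1) := ⟨by linarith [hx.1], by linarith [hx.2]⟩
      have hmy : y / 2 ∈ Set.Ioc (0:ℝ) (m / 2 - 1) := ⟨by linarith [hy.1], by linarith [hy.2]⟩
      have h := hG hmx hmy (by linarith)
      exact mul_le_mul_of_nonneg_left (by simp only at h; linarith) hc.le
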